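/- arXiv:1307.8246 — 6 statements merged into one kernel-verified Lean document; each statement's English description precedes it below -/
import Mathlib

section
/- Let X be a Hausdorff topological vector space and U ⊆ X a closed convex body with 0 in its interior. Then the characteristic cone of U (the set of x such that a + [0,∞)·x ⊆ U for some a ∈ U) equals the zero set of the Minkowski functional of U. -/
open Set Pointwise Filter Topology

/-- The characteristic cone of a set `U`: the set of directions `x` such that
some half-line `a + [0,∞)·x` with `a ∈ U` is contained in `U`. -/
def charCone {X : Type*} [AddCommGroup X] [Module ℝ X] (U : Set X) : Set X :=
  {x | ∃ a ∈ U, ∀ t : ℝ, 0 ≤ t → a + t • x ∈ U}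

theorem stmt0 {X : Type*} [AddCommGroup X] [Module ℝ X] [TopologicalSpace X]
    [IsTopologicalAddGroup X] [ContinuousSMul ℝ X] [T2Space X]
    (U : Set X) (hcl : IsClosed U) (hconv : Convex ℝ U) (h0 : (0 : X) ∈ interior U) :
    charCone U = {x | gauge U x = 0} := by
  have h0U : (0 : X) ∈ U := interior_subset h0
  have hnhds : U ∈ 𝓝 (0 : X) := mem_interior_iff_mem_nhds.mp h0
  ext x
  simp only [charCone, mem_setOf_eq]
  constructor
  · rintro ⟨a, ha, h⟩
    -- first: ∀ t ≥ 0, t • x ∈ U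
    have key : ∀ t : ℝ, 0 ≤ t → t • x ∈ U := by
      intro t ht
      have hev : ∀ᶠ n : ℕ in atTop, (t / n) • a + t • x ∈ U := by
        filter_upwards [eventually_ge_atTop (⌈t⌉₊ + 1)] with n hn
        have hn0 : 0 < (n : ℝ) := by
          have : 0 < n := lt_of_lt_of_le (Nat.succ_pos _) hn
          exact_mod_cast this
        have htn : t ≤ n := le_trans (Nat.le_ceil t) (by exact_mod_cast Nat.le_of_succ_le hn)
        have hle : t / n ≤ 1 := div_le_one_of_le₀ htn hn0.le
        have h1 : a + (n : ℝ) • x ∈ U := h n hn0.le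
        have := hconv h0U h1 (show (0:ℝ) ≤ 1 - t / n by linarith)
          (show (0:ℝ) ≤ t / n by positivity) (by ring)
        simpa [smul_add, smul_smul, div_mul_cancel₀ t hn0.ne', smul_zero] using this
      have htend : Tendsto (fun n : ℕ => (t / n) • a + t • x) atTop (𝓝 (t • x)) := by
        have h1 : Tendsto (fun n : ℕ => (t / n : ℝ)) atTop (𝓝 0) :=
          tendsto_const_div_atTop_nhds_zero_nat t
        have h2 : Tendsto (fun n : ℕ => (t / n) • a) atTop (𝓝 ((0 : ℝ) • a)) :=
          h1.smul tendsto_const_nhds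
        simpa using h2.add (tendsto_const_nhds (x := t • x))
      exact hcl.mem_of_tendsto htend hev
    have hle0 : gauge U x ≤ 0 := by
      refine le_of_forall_pos_le_add fun ε hε => ?_
      have hmem : x ∈ ε • U := by
        rw [Set.mem_smul_set_iff_inv_smul_mem₀ hε.ne']
        exact key ε⁻¹ (by positivity)
      simpa using gauge_le_of_mem hε.le hmem
    exact le_antisymm hle0 (gauge_nonneg x)
  · intro hx
    refine ⟨0, h0U, fun t ht => ?_⟩
    have h1 : gauge U (t • x) ≤ 1 := by
      rw [gauge_smul_of_nonneg ht, hx, smul_zero]; norm_num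
    have := (gauge_le_one_iff_mem_closure hconv hnhds).mp h1
    simpa [hcl.closure_eq] using this
end

section
/- Let X be a Hausdorff topological vector space and U ⊆ X a closed convex body with 0 ∈ int U. Then the map (u, v) ↦ w_{U−u}(v) is continuous on (int U) × X, where w_{U−u} denotes the Minkowski functional of the translated set U − u. -/
open Set Pointwise Filter Topology

private lemma mem_sub_singleton' {X : Type*} [AddCommGroup X] {s : Set X} {a x : X} :
    x ∈ s - {a} ↔ x + a ∈ s := by
  simp [Set.mem_sub, sub_eq_iff_eq_add]

private lemma sub_sub_singleton' {X : Type*} [AddCommGroup X] (s : Set X) (a b : X) :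
    (s - {a}) - {b} = s - {a + b} := by
  ext x
  rw [mem_sub_singleton', mem_sub_singleton', mem_sub_singleton', add_assoc, add_comm b a]

private lemma mem_smul_sub_singleton' {X : Type*} [AddCommGroup X] [Module ℝ X] {t : ℝ}
    (ht : t ≠ 0) {s : Set X} {a v : X} :
    v ∈ t • (s - {a}) ↔ v + t • a ∈ t • s := by
  rw [Set.mem_smul_set_iff_inv_smul_mem₀ ht, Set.mem_smul_set_iff_inv_smul_mem₀ ht,
    mem_sub_singleton', smul_add, inv_smul_smul₀ ht]

set_option maxHeartbeats 1000000 in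
private lemma gauge_sub_singleton_le' {X : Type*} [AddCommGroup X] [Module ℝ X]
    {C : Set X} (hC : Convex ℝ C) (habs : Absorbent ℝ C) {q : ℝ} (hq0 : 0 ≤ q) (hq1 : q < 1)
    {a : X} (ha : a ∈ q • C) (v : X) :
    gauge (C - {a}) v ≤ gauge C v / (1 - q) := by
  have h1q : (0 : ℝ) < 1 - q := by linarith
  refine le_of_forall_pos_le_add fun ε hε => ?_
  obtain ⟨r, hr0, hrlt, hvr⟩ :=
    exists_lt_of_gauge_lt habs
      (show gauge C v < gauge C v + ε * (1 - q) by nlinarith)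
  have hrq : (0 : ℝ) < r / (1 - q) := by positivity
  have key : gauge (C - {a}) v ≤ r / (1 - q) := by
    apply gauge_le_of_mem hrq.le
    rw [mem_smul_sub_singleton' hrq.ne']
    have ha' : (r / (1 - q)) • a ∈ ((r / (1 - q)) * q) • C := by
      rw [mul_smul]
      exact Set.smul_mem_smul_set ha
    have hsum : v + (r / (1 - q)) • a ∈ r • C + ((r / (1 - q)) * q) • C :=
      Set.add_mem_add hvr ha'
    rw [← hC.add_smul hr0.le (by positivity)] at hsum
    have heq : r + r / (1 - q) * q = r / (1 - q) := by
      field_simp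
      ring
    rwa [heq] at hsum
  calc gauge (C - {a}) v ≤ r / (1 - q) := key
    _ ≤ (gauge C v + ε * (1 - q)) / (1 - q) := by
        gcongr
    _ = gauge C v / (1 - q) + ε := by field_simp

set_option maxHeartbeats 2000000 in
theorem stmt1 {X : Type*} [AddCommGroup X] [Module ℝ X] [TopologicalSpace X]
    [IsTopologicalAddGroup X] [ContinuousSMul ℝ X] [T2Space X]
    (U : Set X) (hcl : IsClosed U) (hconv : Convex ℝ U) (h0 : (0 : X) ∈ interior U) :
    ContinuousOn (fun p : X × X => gauge (U - {p.1}) p.2) (interior U ×ˢ (univ : Set X)) := by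
  -- generic facts about translates
  have hnhds : ∀ u ∈ interior U, (U - {u}) ∈ 𝓝 (0 : X) := by
    intro u hu
    have heq : U - {u} = (· + u) ⁻¹' U := by
      ext x; rw [mem_sub_singleton']; rfl
    rw [heq]
    exact ContinuousAt.preimage_mem_nhds (by fun_prop)
      (by rw [zero_add]; exact mem_interior_iff_mem_nhds.1 hu)
  have hcvx : ∀ u : X, Convex ℝ (U - {u}) := fun u => hconv.sub (convex_singleton u)
  have habs : ∀ u ∈ interior U, Absorbent ℝ (U - {u}) := fun u hu =>
    absorbent_nhds_zero (hnhds u hu)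
  rintro ⟨u0, v0⟩ ⟨hu0, -⟩
  set C0 : Set X := U - {u0} with hC0
  have hC0n : C0 ∈ 𝓝 0 := hnhds u0 hu0
  have hC0c : Convex ℝ C0 := hcvx u0
  have hC0a : Absorbent ℝ C0 := habs u0 hu0
  set g : X → ℝ := gauge C0 with hg
  have hgcont : Continuous g :=
    continuous_iff_continuousAt.2 fun x => continuousAt_gauge hC0c hC0n
  have hgv0 : (0 : ℝ) ≤ g v0 := gauge_nonneg v0
  set S : Set (X × X) := interior U ×ˢ (univ : Set X) with hS
  rw [ContinuousWithinAt]
  rw [Metric.tendsto_nhds]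
  intro ε hε
  set ε' : ℝ := min ε 1 with hε'def
  have hε'0 : 0 < ε' := lt_min hε one_pos
  have hε'ε : ε' ≤ ε := min_le_left _ _
  have hε'1 : ε' ≤ 1 := min_le_right _ _
  set M : ℝ := g v0 + 1 with hMdef
  have hM1 : (1 : ℝ) ≤ M := by linarith
  have hM0 : (0 : ℝ) < M := by linarith
  set q : ℝ := min (4⁻¹) (ε' / (8 * M)) with hqdef
  have hq0 : 0 < q := lt_min (by norm_num) (by positivity)
  have hq4 : q ≤ 4⁻¹ := min_le_left _ _
  have hqM : q * (8 * M) ≤ ε' := by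
    rw [← le_div_iff₀ (by positivity)]
    exact min_le_right _ _
  have hqC0 : q • C0 ∈ 𝓝 (0 : X) := (set_smul_mem_nhds_zero_iff hq0.ne').2 hC0n
  -- eventualities
  have hmemS : ∀ᶠ p : X × X in 𝓝[S] (u0, v0), p ∈ S := self_mem_nhdsWithin
  have ht1 : Tendsto (fun p : X × X => p.1 - u0) (𝓝[S] (u0, v0)) (𝓝 0) := by
    have : Tendsto (fun p : X × X => p.1 - u0) (𝓝 (u0, v0)) (𝓝 (u0 - u0)) :=
      (continuous_fst.sub continuous_const).tendsto _
    rw [sub_self] at this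
    exact this.mono_left nhdsWithin_le_nhds
  have ht2 : Tendsto (fun p : X × X => u0 - p.1) (𝓝[S] (u0, v0)) (𝓝 0) := by
    have : Tendsto (fun p : X × X => u0 - p.1) (𝓝 (u0, v0)) (𝓝 (u0 - u0)) :=
      (continuous_const.sub continuous_fst).tendsto _
    rw [sub_self] at this
    exact this.mono_left nhdsWithin_le_nhds
  have he1 : ∀ᶠ p : X × X in 𝓝[S] (u0, v0), p.1 - u0 ∈ q • C0 := ht1.eventually_mem hqC0
  have he2 : ∀ᶠ p : X × X in 𝓝[S] (u0, v0), u0 - p.1 ∈ q • C0 := ht2.eventually_mem hqC0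
  have ht3 : Tendsto (fun p : X × X => g p.2) (𝓝[S] (u0, v0)) (𝓝 (g v0)) :=
    ((hgcont.comp continuous_snd).tendsto _).mono_left nhdsWithin_le_nhds
  have he3 : ∀ᶠ p : X × X in 𝓝[S] (u0, v0), |g p.2 - g v0| < ε' / 4 := by
    have := Metric.tendsto_nhds.1 ht3 (ε' / 4) (by positivity)
    filter_upwards [this] with p hp
    rwa [Real.dist_eq] at hp
  filter_upwards [hmemS, he1, he2, he3] with p hpS h1 h2 h3
  obtain ⟨u, v⟩ := p
  simp only at h1 h2 h3 ⊢
  have hu : u ∈ interior U := hpS.1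
  have hq1 : q < 1 := lt_of_le_of_lt hq4 (by norm_num)
  -- translation identity
  have htrans : ∀ w : X, C0 - {u - u0} = U - {w} → True := fun _ _ => trivial
  have hCeq : C0 - {u - u0} = U - {u} := by
    rw [hC0, sub_sub_singleton']
    congr 1
    ext x
    simp
  -- upper bound: gauge (U - {u}) v ≤ g v / (1 - q)
  have hup : gauge (U - {u}) v ≤ g v / (1 - q) := by
    have := gauge_sub_singleton_le' hC0c hC0a hq0.le hq1 h1 v
    rwa [hCeq] at this
  -- bound on gauge (U - {u}) (u0 - u)
  have hgle : gauge C0 (u0 - u) ≤ q := gauge_le_of_mem hq0.le h2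
  have he : gauge (U - {u}) (u0 - u) ≤ q / (1 - q) := by
    have := gauge_sub_singleton_le' hC0c hC0a hq0.le hq1 h1 (u0 - u)
    rw [hCeq] at this
    refine this.trans ?_
    have h1q : (0:ℝ) ≤ 1 - q := by linarith
    gcongr
  have h1q : (0 : ℝ) < 1 - q := by linarith
  have helt : gauge (U - {u}) (u0 - u) < 2 * q := by
    have : q / (1 - q) < 2 * q := by
      rw [div_lt_iff₀ h1q]
      nlinarith
    exact lt_of_le_of_lt he this
  -- lower bound
  obtain ⟨q', hq'0, hq'lt, hmem'⟩ := exists_lt_of_gauge_lt (habs u hu) helt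
  have hq'1 : q' < 1 := by nlinarith
  have hCeq2 : (U - {u}) - {u0 - u} = C0 := by
    rw [sub_sub_singleton', hC0]
    congr 1
    ext x
    simp
  have hlow' : g v ≤ gauge (U - {u}) v / (1 - q') := by
    have := gauge_sub_singleton_le' (hcvx u) (habs u hu) hq'0.le hq'1 hmem' v
    rwa [hCeq2] at this
  have hf0 : (0 : ℝ) ≤ gauge (U - {u}) v := gauge_nonneg v
  have hgv : (0 : ℝ) ≤ g v := gauge_nonneg v
  have hlow : (1 - 2 * q) * g v ≤ gauge (U - {u}) v := by
    have h1q' : (0 : ℝ) < 1 - q' := by linarith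
    have : (1 - q') * g v ≤ gauge (U - {u}) v := by
      rw [← le_div_iff₀' h1q']
      exact hlow'
    nlinarith
  -- conclude
  set f : ℝ := gauge (U - {u}) v with hfdef
  have hfq : f * (1 - q) ≤ g v := by
    rw [← le_div_iff₀ h1q]
    exact hup
  rw [Real.dist_eq, abs_sub_lt_iff]
  have h3' := abs_sub_lt_iff.1 h3
  -- bound on g v and on f
  have hgvub : g v < g v0 + ε' / 4 := by linarith [h3'.1]
  have hgvlb : g v0 - ε' / 4 < g v := by linarith [h3'.2]
  have hgvM : g v ≤ M := by
    have : ε' / 4 ≤ 1 := by linarith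
    linarith
  have hfub : f ≤ 2 * M := by nlinarith
  have hfq' : f * q ≤ ε' / 4 := by nlinarith
  constructor
  · -- f - g v0 < ε
    nlinarith
  · -- g v0 - f < ε
    have h2qgv : 2 * q * g v ≤ ε' / 4 := by nlinarith
    nlinarith
end

section
/- Let X be a topological space, Ω ⊆ X × ℝ open, F : Ω → ℝ a function, and (x₀, t₀) ∈ Ω. Suppose F and ∂F/∂t are continuous on Ω, F(x₀, t₀) = 0, and ∂F/∂t(x₀, t₀) ≠ 0. Then there exist an open neighborhood G of x₀ in X, an open neighborhood H of t₀ in ℝ with G × H ⊆ Ω, and a continuous function f : G → H such that for all (x, t) ∈ G × H, F(x, t) = 0 if and only if t = f(x). -/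
open Set Filter Topology

theorem auxpos {X : Type*} [TopologicalSpace X]
    (Ω : Set (X × ℝ)) (hΩ : IsOpen Ω) (F : X × ℝ → ℝ) (x₀ : X) (t₀ : ℝ)
    (hmem : (x₀, t₀) ∈ Ω)
    (hFcont : ContinuousOn F Ω)
    (hF'cont : ContinuousOn (fun p : X × ℝ => deriv (fun t => F (p.1, t)) p.2) Ω)
    (hzero : F (x₀, t₀) = 0)
    (hF'pos : 0 < deriv (fun t => F (x₀, t)) t₀) :
    ∃ (G : Set X) (H : Set ℝ) (f : X → ℝ),
      IsOpen G ∧ x₀ ∈ G ∧ IsOpen H ∧ t₀ ∈ H ∧ G ×ˢ H ⊆ Ω ∧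
      ContinuousOn f G ∧ (∀ x ∈ G, f x ∈ H) ∧
      ∀ x ∈ G, ∀ t ∈ H, (F (x, t) = 0 ↔ t = f x) := by
  set D : X × ℝ → ℝ := fun p => deriv (fun t => F (p.1, t)) p.2 with hD
  have hU : IsOpen (Ω ∩ D ⁻¹' Ioi 0) := hF'cont.isOpen_inter_preimage hΩ isOpen_Ioi
  have hmemU : (x₀, t₀) ∈ Ω ∩ D ⁻¹' Ioi 0 := ⟨hmem, hF'pos⟩
  obtain ⟨V, W, hV, hW, hx₀V, ht₀W, hVW⟩ := isOpen_prod_iff.mp hU x₀ t₀ hmemU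
  obtain ⟨δ, hδpos, hball⟩ := Metric.isOpen_iff.mp hW t₀ ht₀W
  set a := t₀ - δ/2 with ha
  set b := t₀ + δ/2 with hb
  have hab : a < b := by dsimp [a, b]; linarith
  have hIccW : Icc a b ⊆ W := by
    intro t ht
    apply hball
    rw [Real.ball_eq_Ioo]
    exact ⟨by simp only [a] at ht; linarith [ht.1], by simp only [b] at ht; linarith [ht.2]⟩
  have hsub : ∀ x ∈ V, ∀ t ∈ Icc a b, (x, t) ∈ Ω ∩ D ⁻¹' Ioi 0 :=
    fun x hx t ht => hVW ⟨hx, hIccW ht⟩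
  have ht₀Icc : t₀ ∈ Icc a b := ⟨by dsimp [a]; linarith, by dsimp [b]; linarith⟩
  have haIcc : a ∈ Icc a b := left_mem_Icc.mpr hab.le
  have hbIcc : b ∈ Icc a b := right_mem_Icc.mpr hab.le
  -- continuity of t ↦ F (x, t) on Icc
  have contt : ∀ x ∈ V, ContinuousOn (fun t => F (x, t)) (Icc a b) := by
    intro x hx
    exact hFcont.comp (Continuous.continuousOn (by continuity))
      (fun t ht => (hsub x hx t ht).1)
  have mono : ∀ x ∈ V, StrictMonoOn (fun t => F (x, t)) (Icc a b) := by
    intro x hx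
    apply strictMonoOn_of_deriv_pos (convex_Icc a b) (contt x hx)
    intro t ht
    rw [interior_Icc] at ht
    exact (hsub x hx t (Ioo_subset_Icc_self ht)).2
  -- continuity of x ↦ F (x, t) on V
  have contx : ∀ t ∈ Icc a b, ContinuousOn (fun x => F (x, t)) V := by
    intro t ht
    exact hFcont.comp (Continuous.continuousOn (by continuity))
      (fun x hx => (hsub x hx t ht).1)
  have hFa : F (x₀, a) < 0 := by
    have := mono x₀ hx₀V haIcc ht₀Icc (by dsimp [a]; linarith)
    simpa [hzero] using this
  have hFb : 0 < F (x₀, b) := by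
    have := mono x₀ hx₀V ht₀Icc hbIcc (by dsimp [b]; linarith)
    simpa [hzero] using this
  set G : Set X := (V ∩ (fun x => F (x, a)) ⁻¹' Iio 0) ∩
      (V ∩ (fun x => F (x, b)) ⁻¹' Ioi 0) with hGdef
  have hGopen : IsOpen G :=
    ((contx a haIcc).isOpen_inter_preimage hV isOpen_Iio).inter
      ((contx b hbIcc).isOpen_inter_preimage hV isOpen_Ioi)
  have hx₀G : x₀ ∈ G := ⟨⟨hx₀V, hFa⟩, ⟨hx₀V, hFb⟩⟩
  have hGV : G ⊆ V := fun x hx => hx.1.1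
  have key : ∀ x ∈ G, ∃ t ∈ Ioo a b, F (x, t) = 0 := by
    intro x hx
    have h0 : (0 : ℝ) ∈ Ioo (F (x, a)) (F (x, b)) := ⟨hx.1.2, hx.2.2⟩
    have := intermediate_value_Ioo hab.le (contt x (hGV hx)) h0
    obtain ⟨t, ht, hFt⟩ := this
    exact ⟨t, ht, hFt⟩
  classical
  set f : X → ℝ := fun x => if hx : x ∈ G then (key x hx).choose else t₀ with hf
  have hfspec : ∀ x ∈ G, f x ∈ Ioo a b ∧ F (x, f x) = 0 := by
    intro x hx
    have h := (key x hx).choose_spec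
    simp only [hf, dif_pos hx]
    exact h
  have uniq : ∀ x ∈ G, ∀ t ∈ Icc a b, F (x, t) = 0 → t = f x := by
    intro x hx t ht hFt
    have h := hfspec x hx
    exact (mono x (hGV hx)).injOn ht (Ioo_subset_Icc_self h.1) (by rw [hFt, h.2])
  refine ⟨G, Ioo a b, f, hGopen, hx₀G, isOpen_Ioo, by
      exact ⟨by dsimp [a]; linarith, by dsimp [b]; linarith⟩, ?_, ?_, fun x hx => (hfspec x hx).1, ?_⟩
  · rintro ⟨x, t⟩ ⟨hx, ht⟩
    exact (hsub x (hGV hx) t (Ioo_subset_Icc_self ht)).1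
  · -- continuity of f on G
    intro x₁ hx₁
    rw [ContinuousWithinAt, Metric.tendsto_nhds]
    intro ε hε
    obtain ⟨hfx₁, hFfx₁⟩ := hfspec x₁ hx₁
    set c := max a (f x₁ - ε) with hc
    set d := min b (f x₁ + ε) with hd
    have hcIcc : c ∈ Icc a b := ⟨le_max_left _ _, max_le hab.le (by linarith [hfx₁.2])⟩
    have hdIcc : d ∈ Icc a b := ⟨le_min hab.le (by linarith [hfx₁.1]), min_le_left _ _⟩
    have hcf : c < f x₁ := max_lt hfx₁.1 (by linarith)
    have hfd : f x₁ < d := lt_min hfx₁.2 (by linarith)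
    have hFc : F (x₁, c) < 0 := by
      have := mono x₁ (hGV hx₁) hcIcc (Ioo_subset_Icc_self hfx₁) hcf
      simpa [hFfx₁] using this
    have hFd : 0 < F (x₁, d) := by
      have := mono x₁ (hGV hx₁) (Ioo_subset_Icc_self hfx₁) hdIcc hfd
      simpa [hFfx₁] using this
    have hc1 : ContinuousAt (fun x => F (x, c)) x₁ :=
      (contx c hcIcc).continuousAt (hV.mem_nhds (hGV hx₁))
    have hd1 : ContinuousAt (fun x => F (x, d)) x₁ :=
      (contx d hdIcc).continuousAt (hV.mem_nhds (hGV hx₁))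
    have ev1 : ∀ᶠ x in 𝓝 x₁, F (x, c) < 0 := hc1.eventually_lt continuousAt_const hFc
    have ev2 : ∀ᶠ x in 𝓝 x₁, 0 < F (x, d) := continuousAt_const.eventually_lt hd1 hFd
    filter_upwards [nhdsWithin_le_nhds ev1, nhdsWithin_le_nhds ev2,
      self_mem_nhdsWithin] with x h1 h2 hxG
    obtain ⟨hfx, hFfx⟩ := hfspec x hxG
    have hlt1 : c < f x := by
      by_contra h
      push_neg at h
      have := (mono x (hGV hxG)).monotoneOn (Ioo_subset_Icc_self hfx) hcIcc h
      rw [hFfx] at this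
      linarith
    have hlt2 : f x < d := by
      by_contra h
      push_neg at h
      have := (mono x (hGV hxG)).monotoneOn hdIcc (Ioo_subset_Icc_self hfx) h
      rw [hFfx] at this
      linarith
    rw [Real.dist_eq, abs_lt]
    constructor
    · have : f x₁ - ε ≤ c := le_max_right _ _
      linarith
    · have : d ≤ f x₁ + ε := min_le_right _ _
      linarith
  · intro x hx t ht
    constructor
    · intro hFt
      exact uniq x hx t (Ioo_subset_Icc_self ht) hFt
    · rintro rfl
      exact (hfspec x hx).2

theorem stmt13 {X : Type*} [TopologicalSpace X]
    (Ω : Set (X × ℝ)) (hΩ : IsOpen Ω) (F : X × ℝ → ℝ) (x₀ : X) (t₀ : ℝ)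
    (hmem : (x₀, t₀) ∈ Ω)
    (hFcont : ContinuousOn F Ω)
    (hdiff : ∀ p ∈ Ω, DifferentiableAt ℝ (fun t => F (p.1, t)) p.2)
    (hF'cont : ContinuousOn (fun p : X × ℝ => deriv (fun t => F (p.1, t)) p.2) Ω)
    (hzero : F (x₀, t₀) = 0)
    (hF'ne : deriv (fun t => F (x₀, t)) t₀ ≠ 0) :
    ∃ (G : Set X) (H : Set ℝ) (f : X → ℝ),
      IsOpen G ∧ x₀ ∈ G ∧ IsOpen H ∧ t₀ ∈ H ∧ G ×ˢ H ⊆ Ω ∧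
      ContinuousOn f G ∧ (∀ x ∈ G, f x ∈ H) ∧
      ∀ x ∈ G, ∀ t ∈ H, (F (x, t) = 0 ↔ t = f x) := by
  rcases hF'ne.lt_or_gt with hneg | hpos
  · -- apply aux to -F
    have hderiv : ∀ p : X × ℝ, deriv (fun t => -F (p.1, t)) p.2
        = -deriv (fun t => F (p.1, t)) p.2 := by
      intro p
      rw [← deriv.neg]
      rfl
    obtain ⟨G, H, f, h1, h2, h3, h4, h5, h6, h7, h8⟩ :=
      auxpos Ω hΩ (fun p => -F p) x₀ t₀ hmem hFcont.neg
        (by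
          have : ContinuousOn (fun p : X × ℝ =>
              -deriv (fun t => F (p.1, t)) p.2) Ω := hF'cont.neg
          refine this.congr fun p hp => ?_
          exact hderiv p)
        (by simp [hzero])
        (by rw [hderiv (x₀, t₀)]; simpa using hneg)
    refine ⟨G, H, f, h1, h2, h3, h4, h5, h6, h7, fun x hx t ht => ?_⟩
    rw [← neg_eq_zero]
    exact h8 x hx t ht
  · exact auxpos Ω hΩ F x₀ t₀ hmem hFcont hF'cont hzero hpos
end

section
/- Let γ : ℝ → ℝ be C¹ with 0 ≤ γ'(t) < (γ(t)+1)/t for t > 0 and γ = 0 near 0. For fixed w ≥ 0 and p ∈ ℝ, define F(α) = (1−α)·γ(w/α) − α − p on (0,∞). Then F'(α) = −γ(w/α) − ((1−α)/α²)·w·γ'(w/α) − 1 < 0 for all α > 0. -/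
theorem stmt15 (γ : ℝ → ℝ) (hγ : ContDiff ℝ 1 γ)
    (hineq : ∀ t : ℝ, 0 < t → 0 ≤ deriv γ t ∧ deriv γ t < (γ t + 1) / t)
    (hzero : ∃ ε > (0 : ℝ), ∀ t : ℝ, |t| < ε → γ t = 0)
    (w p : ℝ) (hw : 0 ≤ w) :
    ∀ α : ℝ, 0 < α →
      HasDerivAt (fun α : ℝ => (1 - α) * γ (w / α) - α - p)
        (-γ (w / α) - (1 - α) / α ^ 2 * w * deriv γ (w / α) - 1) α ∧
      -γ (w / α) - (1 - α) / α ^ 2 * w * deriv γ (w / α) - 1 < 0 := by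
  intro α hα
  have hα0 : α ≠ 0 := ne_of_gt hα
  set d := deriv γ (w / α) with hd
  have hγd : Differentiable ℝ γ := hγ.differentiable one_ne_zero
  have h1 : HasDerivAt (fun a : ℝ => w / a) (-(w / α ^ 2)) α := by
    have := (hasDerivAt_inv hα0).const_mul w
    simpa [div_eq_mul_inv, neg_div, mul_div_assoc] using this
  have h2 : HasDerivAt γ d (w / α) := (hγd (w / α)).hasDerivAt
  have h3 : HasDerivAt (fun a : ℝ => γ (w / a)) (d * -(w / α ^ 2)) α :=
    h2.comp α h1
  have h4 : HasDerivAt (fun a : ℝ => 1 - a) (-1) α := by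
    simpa using (hasDerivAt_id α).const_sub 1
  have h5 : HasDerivAt (fun a : ℝ => (1 - a) * γ (w / a))
      ((-1) * γ (w / α) + (1 - α) * (d * -(w / α ^ 2))) α := h4.mul h3
  have h6 : HasDerivAt (fun a : ℝ => (1 - a) * γ (w / a) - a - p)
      ((-1) * γ (w / α) + (1 - α) * (d * -(w / α ^ 2)) - 1) α :=
    (h5.sub (hasDerivAt_id α)).sub_const p
  constructor
  · convert h6 using 1
    field_simp
    ring
  · rcases eq_or_lt_of_le hw with hw0 | hw0
    · obtain ⟨ε, hε, hz⟩ := hzero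
      have : γ (w / α) = 0 := hz _ (by simp [← hw0, abs_of_nonneg, hε])
      rw [this, ← hw0]
      norm_num
    · set t := w / α with ht
      have htpos : 0 < t := div_pos hw0 hα
      obtain ⟨hd0, hdlt⟩ := hineq t htpos
      have hdlt' : t * deriv γ t < γ t + 1 := by
        rw [div_eq_mul_inv] at hdlt
        calc t * deriv γ t < t * ((γ t + 1) * t⁻¹) := by
              exact mul_lt_mul_of_pos_left hdlt htpos
          _ = γ t + 1 := by field_simp
      have hwt : w = α * t := by rw [ht]; field_simp
      -- goal: -γ t - (1-α)/α^2 * w * deriv γ t - 1 < 0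
      rw [hwt]
      have key : (1 - α) / α ^ 2 * (α * t) * deriv γ t = (1 - α) / α * (t * deriv γ t) := by
        field_simp
      rw [key]
      rcases le_or_gt α 1 with h1α | h1α
      · have hnn : 0 ≤ (1 - α) / α * (t * deriv γ t) := by
          apply mul_nonneg (div_nonneg (by linarith) hα.le)
          exact mul_nonneg htpos.le hd0
        have hγpos : 0 < γ t + 1 := lt_of_le_of_lt (mul_nonneg htpos.le hd0) hdlt'
        nlinarith
      · have hneg : (1 - α) / α < 0 := div_neg_of_neg_of_pos (by linarith) hα
        have : (1 - α) / α * (γ t + 1) < (1 - α) / α * (t * deriv γ t) :=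
          mul_lt_mul_of_neg_left hdlt' hneg
        have hγpos : 0 < γ t + 1 := lt_of_le_of_lt (mul_nonneg htpos.le hd0) hdlt'
        have hfin : 0 < (γ t + 1) / α := div_pos hγpos hα
        have heq : γ t + 1 + (1 - α) / α * (γ t + 1) = (γ t + 1) / α := by
          field_simp; ring
        nlinarith
end

section
/- Let X be a Hausdorff topological vector space, U ⊆ X a closed convex body with 0 ∈ int U, y ∈ cc(U) with −y ∈ ∂U, and φ a continuous linear functional with φ(y) = 1 and φ ≥ −1 on U. In ℝ³ with U = {(x₁,x₂,x₃) : x₁ ≥ max(x₂,0) − 1 and x₁ ≥ max(x₃,0) − 1}, y = (1,0,0), Z = {x : x₁ = −1}: the map H constructed from c(z) = (w_U(z+y) − 1)·y (as in Bessaga–Pełczyński's book) is not continuous; specifically, for xₙ = (−1,−1,1/n) → x = (−1,−1,0), one has H(xₙ) → (−1,−5/2,0) ≠ (−1,−1,0) = H(x). -/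
open Set Pointwise Filter Topology

noncomputable section

/-- The convex body of the counterexample:
`U = {x ∈ ℝ³ : x₁ ≥ max(x₂,0) − 1 and x₁ ≥ max(x₃,0) − 1}`. -/
def U16 : Set (ℝ × ℝ × ℝ) := {x | max x.2.1 0 - 1 ≤ x.1 ∧ max x.2.2 0 - 1 ≤ x.1}

def y16 : ℝ × ℝ × ℝ := (1, 0, 0)

/-- `c(z) = (w_U(z+y) − 1)·y`, using the Minkowski functional (gauge) of `U`. -/
def c16 (z : ℝ × ℝ × ℝ) : ℝ × ℝ × ℝ := (gauge U16 (z + y16) - 1) • y16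

/-- The parameter `t_u` of `u(z)` on the ray `c(z) + t(z − c(z))`:
`u(z) = c(z) + t_u (z − c(z))` where `t_u = 1 / w_{U−c(z)}(z − c(z))`. -/
def tu16 (z : ℝ × ℝ × ℝ) : ℝ := 1 / gauge (U16 - {c16 z}) (z - c16 z)

/-- The value at `z ∈ Z` of the map `H` from Bessaga–Pełczyński's book: `h_z` is the
identity on `(c(z), v(z)]` with `v(z) = (u(z)+c(z))/2`, and on `v(z)+[0,∞)(z−c(z))` it is
the affine map fixing `v(z)` and sending `u(z)` to `z`; when the ray from `c(z)` through
`z` stays in `U` one has `u(z) = z` and `H(z) = z`. -/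
def H16 (z : ℝ × ℝ × ℝ) : ℝ × ℝ × ℝ :=
  if gauge (U16 - {c16 z}) (z - c16 z) = 0 then z
  else c16 z + (tu16 z / 2 + (1 - tu16 z / 2) ^ 2 / (tu16 z / 2)) • (z - c16 z)

-- helper lemmas

lemma mem_smul_U16' {t : ℝ} (ht : 0 < t) {S : Set (ℝ × ℝ × ℝ)} (x : ℝ × ℝ × ℝ) :
    x ∈ t • S ↔ t⁻¹ • x ∈ S := Set.mem_smul_set_iff_inv_smul_mem₀ ht.ne' _ _

lemma mem_sub_singleton16 {S : Set (ℝ × ℝ × ℝ)} {c x : ℝ × ℝ × ℝ} :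
    x ∈ S - {c} ↔ x + c ∈ S := by
  constructor
  · rintro ⟨a, ha, b, hb, rfl⟩
    simp only [Set.mem_singleton_iff] at hb
    subst hb
    simpa using ha
  · intro h
    exact ⟨x + c, h, c, rfl, add_sub_cancel_right x c⟩

lemma gauge_eq_of16 (S : Set (ℝ × ℝ × ℝ)) (x : ℝ × ℝ × ℝ) (a : ℝ) (ha : 0 < a)
    (hmem : x ∈ a • S) (hlb : ∀ t : ℝ, 0 < t → x ∈ t • S → a ≤ t) : gauge S x = a := by
  refine le_antisymm (gauge_le_of_mem ha.le hmem) ?_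
  rw [gauge_def]
  exact le_csInf ⟨a, ha, hmem⟩ fun t ht => hlb t ht.1 ht.2

lemma gauge_eq_zero_of16 (S : Set (ℝ × ℝ × ℝ)) (x : ℝ × ℝ × ℝ)
    (h : ∀ t : ℝ, 0 < t → x ∈ t • S) : gauge S x = 0 := by
  refine le_antisymm ?_ (gauge_nonneg _)
  refine le_of_forall_pos_le_add fun ε hε => ?_
  simpa using gauge_le_of_mem hε.le (h ε hε)

lemma smul_mk16 (t : ℝ) (a b c : ℝ) : t • ((a, b, c) : ℝ × ℝ × ℝ) = (t * a, t * b, t * c) := rfl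

lemma gaugeA : gauge U16 ((0 : ℝ), -1, 0) = 0 := by
  apply gauge_eq_zero_of16
  intro t ht
  rw [mem_smul_U16' ht, smul_mk16]
  have := inv_nonneg.mpr ht.le
  simp only [U16, Set.mem_setOf_eq]
  constructor <;> simp <;> linarith

lemma c16_base : c16 (-1, -1, 0) = (-1, 0, 0) := by
  have h : ((-1, -1, 0) : ℝ × ℝ × ℝ) + y16 = (0, -1, 0) := by
    simp [y16, Prod.ext_iff]
  rw [c16, h, gaugeA]
  norm_num [y16, smul_mk16, Prod.ext_iff]

lemma gaugeB : gauge (U16 - {((-1 : ℝ), 0, 0)}) ((0 : ℝ), -1, 0) = 0 := by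
  apply gauge_eq_zero_of16
  intro t ht
  rw [mem_smul_U16' ht, smul_mk16, mem_sub_singleton16]
  have := inv_nonneg.mpr ht.le
  simp only [U16, Set.mem_setOf_eq, Prod.fst_add, Prod.snd_add]
  constructor <;> simp <;> linarith

lemma H16_base : H16 (-1, -1, 0) = (-1, -1, 0) := by
  rw [H16, c16_base]
  have h : ((-1, -1, 0) : ℝ × ℝ × ℝ) - (-1, 0, 0) = (0, -1, 0) := by
    simp [Prod.ext_iff]
  rw [h, gaugeB, if_pos rfl]

lemma gaugeC (s : ℝ) (hs : 0 < s) : gauge U16 ((0 : ℝ), -1, s) = s := by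
  apply gauge_eq_of16 _ _ _ hs
  · rw [mem_smul_U16' hs, smul_mk16]
    have h1 := inv_nonneg.mpr hs.le
    have h2 : s⁻¹ * s = 1 := inv_mul_cancel₀ hs.ne'
    simp only [U16, Set.mem_setOf_eq]
    constructor <;> simp [h2] <;> linarith
  · intro t ht hmem
    rw [mem_smul_U16' ht, smul_mk16] at hmem
    obtain ⟨-, h2⟩ := hmem
    simp only [U16, Set.mem_setOf_eq] at h2
    have hle : t⁻¹ * s ≤ max (t⁻¹ * s) 0 := le_max_left _ _
    have h3 : t⁻¹ * s ≤ 1 := by linarith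
    nlinarith [mul_inv_cancel₀ ht.ne']

lemma c16_s (s : ℝ) (hs : 0 < s) : c16 (-1, -1, s) = (s - 1, 0, 0) := by
  have h : ((-1, -1, s) : ℝ × ℝ × ℝ) + y16 = (0, -1, s) := by
    simp [y16, Prod.ext_iff]
  rw [c16, h, gaugeC s hs]
  simp [y16, smul_mk16, Prod.ext_iff]

lemma gaugeD (s : ℝ) (hs : 0 < s) :
    gauge (U16 - {((s - 1 : ℝ), 0, 0)}) ((-s : ℝ), -1, s) = 2 := by
  apply gauge_eq_of16 _ _ _ (by norm_num : (0:ℝ) < 2)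
  · rw [mem_smul_U16' (by norm_num), smul_mk16, mem_sub_singleton16]
    simp only [U16, Set.mem_setOf_eq, Prod.fst_add, Prod.snd_add]
    have hm : (2:ℝ)⁻¹ * s ⊔ 0 = 2⁻¹ * s := max_eq_left (by positivity)
    constructor
    · simp
      nlinarith
    · simp [hm]
      nlinarith
  · intro t ht hmem
    rw [mem_smul_U16' ht, smul_mk16, mem_sub_singleton16] at hmem
    obtain ⟨-, h2⟩ := hmem
    simp only [U16, Set.mem_setOf_eq, Prod.fst_add, Prod.snd_add] at h2
    have hle : t⁻¹ * s ≤ max (t⁻¹ * s) 0 := le_max_left _ _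
    rw [add_zero] at h2
    have h3 : t⁻¹ * s + t⁻¹ * s ≤ s := by
      nlinarith
    nlinarith [mul_inv_cancel₀ ht.ne', mul_pos (inv_pos.mpr ht) hs]

lemma H16_s (s : ℝ) (hs : 0 < s) :
    H16 (-1, -1, s) = (-1 - 3 * s / 2, -5/2, 5 * s / 2) := by
  have hc := c16_s s hs
  have hd : ((-1, -1, s) : ℝ × ℝ × ℝ) - (s - 1, 0, 0) = (-s, -1, s) := by
    simp [Prod.ext_iff]; ring
  rw [H16, hc, hd, gaugeD s hs, if_neg (by norm_num), tu16, hc, hd, gaugeD s hs]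
  norm_num [smul_mk16, Prod.ext_iff]
  constructor <;> ring

theorem stmt16 :
    H16 (-1, -1, 0) = (-1, -1, 0) ∧
    Tendsto (fun n : ℕ => ((-1, -1, 1 / (n + 1)) : ℝ × ℝ × ℝ)) atTop (𝓝 (-1, -1, 0)) ∧
    Tendsto (fun n : ℕ => H16 (-1, -1, 1 / (n + 1))) atTop (𝓝 (-1, -5/2, 0)) ∧
    ((-1, -5/2, 0) : ℝ × ℝ × ℝ) ≠ H16 (-1, -1, 0) ∧
    ¬ ContinuousAt H16 (-1, -1, 0) := by
  have hlim : Tendsto (fun n : ℕ => (1 : ℝ) / (n + 1)) atTop (𝓝 0) :=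
    tendsto_one_div_add_atTop_nhds_zero_nat
  have hpos : ∀ n : ℕ, (0 : ℝ) < 1 / (n + 1) := fun n => by positivity
  have h1 : H16 (-1, -1, 0) = (-1, -1, 0) := H16_base
  have h2 : Tendsto (fun n : ℕ => ((-1, -1, 1 / (n + 1)) : ℝ × ℝ × ℝ)) atTop
      (𝓝 (-1, -1, 0)) := by
    have hg : Continuous (fun s : ℝ => ((-1, -1, s) : ℝ × ℝ × ℝ)) := by fun_prop
    have := (hg.tendsto 0).comp hlim
    exact this
  have h3 : Tendsto (fun n : ℕ => H16 (-1, -1, 1 / (n + 1))) atTop (𝓝 (-1, -5/2, 0)) := by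
    have hg : Continuous (fun s : ℝ => ((-1 - 3 * s / 2, -5/2, 5 * s / 2) : ℝ × ℝ × ℝ)) := by
      fun_prop
    have h := (hg.tendsto 0).comp hlim
    have heq : (fun n : ℕ => H16 (-1, -1, 1 / (n + 1))) =
        (fun s : ℝ => ((-1 - 3 * s / 2, -5/2, 5 * s / 2) : ℝ × ℝ × ℝ)) ∘
          (fun n : ℕ => (1 : ℝ) / (n + 1)) := by
      funext n
      exact H16_s _ (hpos n)
    rw [heq]
    simpa using h
  have h4 : ((-1, -5/2, 0) : ℝ × ℝ × ℝ) ≠ H16 (-1, -1, 0) := by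
    rw [h1]
    simp [Prod.ext_iff]
    norm_num
  refine ⟨h1, h2, h3, h4, ?_⟩
  intro hc
  have h5 := (hc.tendsto.comp h2)
  rw [h1] at h5
  have h6 : Tendsto (fun n : ℕ => H16 (-1, -1, 1 / (n + 1))) atTop (𝓝 (-1, -1, 0)) := h5
  exact h4 ((tendsto_nhds_unique h3 h6).trans h1.symm)


end
end

section
/- Let X be a Hausdorff topological vector space, U ⊆ X a closed convex body whose characteristic cone cc(U) is not a linear subspace. Then the pair (X, U) is homeomorphic to the pair (X, X⁺), where X⁺ = φ⁻¹([−1, ∞)) is a closed half-space determined by a continuous linear functional φ; i.e., there is a homeomorphism H : X → X with H(U) = X⁺. -/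
set_option linter.unusedSectionVars false


open Set Filter Topology

namespace BK19

variable {X : Type*} [AddCommGroup X] [Module ℝ X] [TopologicalSpace X]
  [IsTopologicalAddGroup X] [ContinuousSMul ℝ X]

/-- projection along `y` to the kernel of `ψ`. -/
noncomputable def piv (ψ : X →L[ℝ] ℝ) (y : X) (x : X) : X := x - ψ x • y

/-- The dilation homeomorphism. -/
noncomputable def th (ψ : X →L[ℝ] ℝ) (y : X) (m : ℝ) (x : X) : X :=
  Real.exp (m * ψ x) • piv ψ y x + ψ x • y

/-- Inverse dilation. -/
noncomputable def thInv (ψ : X →L[ℝ] ℝ) (y : X) (m : ℝ) (x : X) : X :=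
  Real.exp (-(m * ψ x)) • piv ψ y x + ψ x • y

/-- Fiber set. -/
noncomputable def SS (V : Set X) (ψ : X →L[ℝ] ℝ) (y : X) (m : ℝ) (w : X) : Set ℝ :=
  {s | Real.exp (-(m * s)) • piv ψ y w + s • y ∈ V}

/-- Entry-time function. -/
noncomputable def Gf (V : Set X) (ψ : X →L[ℝ] ℝ) (y : X) (m : ℝ) (w : X) : ℝ :=
  sInf (SS V ψ y m w)

section Core

variable {V : Set X} {y : X} {ψ : X →L[ℝ] ℝ} {β γ m : ℝ}

lemma psi_piv (hψy : ψ y = 1) (x : X) : ψ (piv ψ y x) = 0 := by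
  simp [piv, hψy]

lemma piv_piv (hψy : ψ y = 1) (x : X) : piv ψ y (piv ψ y x) = piv ψ y x := by
  simp [piv, hψy]

lemma piv_add_smul_y (hψy : ψ y = 1) (w : X) (t : ℝ) :
    piv ψ y (w + t • y) = piv ψ y w := by
  simp only [piv, map_add, map_smul, hψy, smul_eq_mul, mul_one, add_smul]
  abel

lemma piv_smul (c : ℝ) (x : X) : piv ψ y (c • x) = c • piv ψ y x := by
  simp [piv, smul_smul, smul_sub]

lemma psi_th (hψy : ψ y = 1) (x : X) : ψ (th ψ y m x) = ψ x := by
  simp [th, psi_piv hψy, hψy]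

lemma piv_th (hψy : ψ y = 1) (x : X) :
    piv ψ y (th ψ y m x) = Real.exp (m * ψ x) • piv ψ y x := by
  rw [th, piv_add_smul_y hψy, piv_smul, piv_piv hψy]

lemma psi_thInv (hψy : ψ y = 1) (x : X) : ψ (thInv ψ y m x) = ψ x := by
  simp [thInv, psi_piv hψy, hψy]

lemma piv_thInv (hψy : ψ y = 1) (x : X) :
    piv ψ y (thInv ψ y m x) = Real.exp (-(m * ψ x)) • piv ψ y x := by
  rw [thInv, piv_add_smul_y hψy, piv_smul, piv_piv hψy]

lemma thInv_th (hψy : ψ y = 1) (x : X) : thInv ψ y m (th ψ y m x) = x := by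
  rw [thInv, psi_th hψy, piv_th hψy, smul_smul, ← Real.exp_add]
  simp [piv]

lemma th_thInv (hψy : ψ y = 1) (x : X) : th ψ y m (thInv ψ y m x) = x := by
  rw [th, psi_thInv hψy, piv_thInv hψy, smul_smul, ← Real.exp_add]
  simp [piv]

lemma continuous_th : Continuous (th ψ y m) := by
  unfold th piv
  fun_prop

lemma continuous_thInv : Continuous (thInv ψ y m) := by
  unfold thInv piv
  fun_prop

/-- The dilation as a homeomorphism. -/
noncomputable def thHomeo (ψ : X →L[ℝ] ℝ) (y : X) (m : ℝ) (hψy : ψ y = 1) : X ≃ₜ X where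
  toFun := th ψ y m
  invFun := thInv ψ y m
  left_inv := thInv_th hψy
  right_inv := th_thInv hψy
  continuous_toFun := continuous_th
  continuous_invFun := continuous_thInv

/-- the key arithmetic estimate. -/
lemma key_arith (hβγ : β ≤ -γ) (hm : m = (-β - γ + 1)⁻¹) {s s' : ℝ}
    (hs : β ≤ s) (hss : s ≤ s') :
    Real.exp (-(m * (s' - s))) * s + (1 - Real.exp (-(m * (s' - s)))) * (-γ) ≤ s' := by
  have hden : (0:ℝ) < -β - γ + 1 := by linarith
  have hm0 : 0 < m := by rw [hm]; positivity
  set l := Real.exp (-(m * (s' - s))) with hl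
  have hl0 : 0 < l := Real.exp_pos _
  have hl1 : l ≤ 1 := by
    rw [hl, Real.exp_le_one_iff]
    nlinarith
  have h1l : 1 - l ≤ m * (s' - s) := by
    have := Real.add_one_le_exp (-(m * (s' - s)))
    nlinarith
  rcases le_or_gt (-γ) s with h | h
  · nlinarith
  · -- β ≤ s < -γ
    have hmd : m * (-β - γ + 1) = 1 := by
      rw [hm]; field_simp
    nlinarith [mul_le_mul_of_nonneg_left (show -γ - s ≤ -β - γ from by linarith)
      (le_of_lt hm0), mul_le_mul_of_nonneg_right h1l (show (0:ℝ) ≤ -γ - s by linarith)]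

variable (hcl : IsClosed V) (hconv : Convex ℝ V)
  (hrec : ∀ x ∈ V, ∀ t : ℝ, 0 ≤ t → x + t • y ∈ V)
  (hψy : ψ y = 1) (hβ : ∀ x ∈ V, β ≤ ψ x)
  (h0 : (0:X) ∈ interior V) (hγ : -γ • y ∈ interior V) (hγ0 : 0 < γ)
  (hm : m = (-β - γ + 1)⁻¹)

include hψy hβ in
lemma mem_SS_psi {w : X} {s : ℝ} (h : s ∈ SS V ψ y m w) : β ≤ s := by
  have := hβ _ h
  rwa [map_add, map_smul, map_smul, psi_piv hψy, smul_eq_mul, smul_eq_mul, hψy,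
    mul_zero, mul_one, zero_add] at this

include hconv hrec hψy hβ hγ hγ0 hm in
lemma SS_upward {w : X} {s s' : ℝ} (h : s ∈ SS V ψ y m w) (hss : s ≤ s') :
    s' ∈ SS V ψ y m w := by
  have hβs : β ≤ s := mem_SS_psi hψy hβ h
  set l := Real.exp (-(m * (s' - s))) with hl
  have hl0 : 0 < l := Real.exp_pos _
  have hm0 : 0 < m := by
    rw [hm]
    have : (0:ℝ) < -β - γ + 1 := by
      have : β ≤ -γ := by
        have := hβ _ (interior_subset hγ)
        rwa [map_smul, hψy, smul_eq_mul, mul_one] at this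
      linarith
    positivity
  have hl1 : l ≤ 1 := by
    rw [hl, Real.exp_le_one_iff]
    nlinarith
  have hcomb : l • (Real.exp (-(m * s)) • piv ψ y w + s • y) + (1 - l) • (-γ • y) ∈ V :=
    hconv h (interior_subset hγ) (le_of_lt hl0) (by linarith) (by ring)
  have hexp : l * Real.exp (-(m * s)) = Real.exp (-(m * s')) := by
    rw [hl, ← Real.exp_add]; congr 1; ring
  have heq : l • (Real.exp (-(m * s)) • piv ψ y w + s • y) + (1 - l) • (-γ • y)
      = Real.exp (-(m * s')) • piv ψ y w + (l * s + (1 - l) * (-γ)) • y := by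
    rw [← hexp]; module
  rw [heq] at hcomb
  have harith : l * s + (1 - l) * (-γ) ≤ s' := by
    have hβγ : β ≤ -γ := by
      have := hβ _ (interior_subset hγ)
      rwa [map_smul, hψy, smul_eq_mul, mul_one] at this
    exact key_arith hβγ hm hβs hss
  have := hrec _ hcomb (s' - (l * s + (1 - l) * (-γ))) (by linarith)
  have heq2 : Real.exp (-(m * s')) • piv ψ y w + (l * s + (1 - l) * (-γ)) • y
      + (s' - (l * s + (1 - l) * (-γ))) • y
      = Real.exp (-(m * s')) • piv ψ y w + s' • y := by
    module
  rwa [heq2] at this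

include hcl in
lemma SS_closed (w : X) : IsClosed (SS V ψ y m w) := by
  have : Continuous fun s : ℝ => Real.exp (-(m * s)) • piv ψ y w + s • y := by fun_prop
  exact hcl.preimage this

include hrec h0 hm hγ0 hβ hψy hγ in
lemma SS_nonempty (w : X) : (SS V ψ y m w).Nonempty := by
  have hm0 : 0 < m := by
    rw [hm]
    have : β ≤ -γ := by
      have := hβ _ (interior_subset hγ)
      rwa [map_smul, hψy, smul_eq_mul, mul_one] at this
    have : (0:ℝ) < -β - γ + 1 := by linarith
    positivity
  have htend : Tendsto (fun s : ℝ => Real.exp (-(m * s)) • piv ψ y w) atTop (𝓝 0) := by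
    have h1 : Tendsto (fun s : ℝ => Real.exp (-(m * s))) atTop (𝓝 0) := by
      have h2 : Tendsto (fun s : ℝ => m * s) atTop atTop :=
        Tendsto.const_mul_atTop hm0 tendsto_id
      have h3 : Tendsto (fun s : ℝ => -(m * s)) atTop atBot :=
        tendsto_neg_atTop_atBot.comp h2
      exact Real.tendsto_exp_atBot.comp h3
    have := h1.smul_const (piv ψ y w)
    simpa using this
  have hev : ∀ᶠ s : ℝ in atTop, Real.exp (-(m * s)) • piv ψ y w ∈ interior V :=
    htend.eventually (IsOpen.mem_nhds isOpen_interior h0)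
  have hev2 : ∀ᶠ s : ℝ in atTop, (0:ℝ) ≤ s := eventually_ge_atTop 0
  obtain ⟨s, hs1, hs2⟩ := (hev.and hev2).exists
  exact ⟨s, hrec _ (interior_subset hs1) s hs2⟩

include hψy hβ in
lemma SS_bddBelow (w : X) : BddBelow (SS V ψ y m w) :=
  ⟨β, fun s hs => mem_SS_psi hψy hβ hs⟩

include hcl hconv hrec hψy hβ h0 hγ hγ0 hm in
lemma SS_eq_Ici (w : X) : SS V ψ y m w = Ici (Gf V ψ y m w) := by
  have hne := SS_nonempty hrec hψy hβ h0 hγ hγ0 hm w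
  have hbdd := SS_bddBelow hψy hβ (V := V) (m := m) w
  have hmem : Gf V ψ y m w ∈ SS V ψ y m w :=
    (SS_closed hcl w).csInf_mem hne hbdd
  ext s
  constructor
  · exact fun hs => csInf_le hbdd hs
  · exact fun hs => SS_upward hconv hrec hψy hβ hγ hγ0 hm hmem hs

include hcl hconv hrec hψy hβ h0 hγ hγ0 hm in
lemma Gf_mem (w : X) : Gf V ψ y m w ∈ SS V ψ y m w := by
  have hne := SS_nonempty hrec hψy hβ h0 hγ hγ0 hm w
  exact (SS_closed hcl w).csInf_mem hne (SS_bddBelow hψy hβ w)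

include hψy in
lemma SS_shift (w : X) (t : ℝ) : SS V ψ y m (w + t • y) = SS V ψ y m w := by
  unfold SS
  rw [piv_add_smul_y hψy]

include hψy in
lemma Gf_shift (w : X) (t : ℝ) : Gf V ψ y m (w + t • y) = Gf V ψ y m w := by
  unfold Gf
  rw [SS_shift hψy]

include hrec in
/-- interior points move up along `y` staying interior. -/
lemma interior_rec {x : X} (hx : x ∈ interior V) {t : ℝ} (ht : 0 ≤ t) :
    x + t • y ∈ interior V := by
  have hopen : IsOpen ((fun z => z + t • y) '' interior V) :=
    (isOpenMap_add_right (t • y)) _ isOpen_interior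
  have hsub : (fun z => z + t • y) '' interior V ⊆ V := by
    rintro _ ⟨z, hz, rfl⟩
    exact hrec _ (interior_subset hz) t ht
  exact interior_maximal hsub hopen ⟨x, hx, rfl⟩

include hcl hconv hrec hψy hβ h0 hγ hγ0 hm in
/-- strictly above the entry time is interior. -/
lemma strict_above_interior {w : X} {s' : ℝ} (hs' : Gf V ψ y m w < s') :
    Real.exp (-(m * s')) • piv ψ y w + s' • y ∈ interior V := by
  set s := Gf V ψ y m w with hsdef
  have hmem : s ∈ SS V ψ y m w := Gf_mem hcl hconv hrec hψy hβ h0 hγ hγ0 hm w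
  have hβs : β ≤ s := mem_SS_psi hψy hβ hmem
  have hβγ : β ≤ -γ := by
    have := hβ _ (interior_subset hγ)
    rwa [map_smul, hψy, smul_eq_mul, mul_one] at this
  have hm0 : 0 < m := by
    rw [hm]
    have : (0:ℝ) < -β - γ + 1 := by linarith
    positivity
  set l := Real.exp (-(m * (s' - s))) with hl
  have hl0 : 0 < l := Real.exp_pos _
  have hl1 : l < 1 := by
    rw [hl, Real.exp_lt_one_iff]
    nlinarith
  have hcomb : l • (Real.exp (-(m * s)) • piv ψ y w + s • y) + (1 - l) • (-γ • y)
      ∈ interior V :=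
    hconv.combo_closure_interior_mem_interior (subset_closure hmem) hγ
      (le_of_lt hl0) (by linarith) (by ring)
  have hexp : l * Real.exp (-(m * s)) = Real.exp (-(m * s')) := by
    rw [hl, ← Real.exp_add]; congr 1; ring
  have heq : l • (Real.exp (-(m * s)) • piv ψ y w + s • y) + (1 - l) • (-γ • y)
      = Real.exp (-(m * s')) • piv ψ y w + (l * s + (1 - l) * (-γ)) • y := by
    rw [← hexp]; module
  rw [heq] at hcomb
  have harith : l * s + (1 - l) * (-γ) ≤ s' := key_arith hβγ hm hβs (le_of_lt hs')
  have := interior_rec hrec hcomb (t := s' - (l * s + (1 - l) * (-γ))) (by linarith)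
  have heq2 : Real.exp (-(m * s')) • piv ψ y w + (l * s + (1 - l) * (-γ)) • y
      + (s' - (l * s + (1 - l) * (-γ))) • y
      = Real.exp (-(m * s')) • piv ψ y w + s' • y := by
    module
  rwa [heq2] at this

include hcl hconv hrec hψy hβ h0 hγ hγ0 hm in
lemma Gf_continuous : Continuous (Gf V ψ y m) := by
  rw [continuous_iff_continuousAt]
  intro w₀
  rw [ContinuousAt]
  apply (nhds_basis_Icc_pos (Gf V ψ y m w₀)).tendsto_right_iff.2
  intro ε hε
  set s₀ := Gf V ψ y m w₀ with hs₀
  -- upper bound neighborhood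
  have hupper : ∀ᶠ w in 𝓝 w₀, Gf V ψ y m w ≤ s₀ + ε := by
    have hint : Real.exp (-(m * (s₀ + ε))) • piv ψ y w₀ + (s₀ + ε) • y ∈ interior V :=
      strict_above_interior hcl hconv hrec hψy hβ h0 hγ hγ0 hm (by linarith)
    have hcont : Continuous fun w => Real.exp (-(m * (s₀ + ε))) • piv ψ y w + (s₀ + ε) • y := by
      unfold piv; fun_prop
    have : ∀ᶠ w in 𝓝 w₀,
        Real.exp (-(m * (s₀ + ε))) • piv ψ y w + (s₀ + ε) • y ∈ interior V :=
      (hcont.tendsto w₀).eventually (IsOpen.mem_nhds isOpen_interior hint)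
    filter_upwards [this] with w hw
    have hw2 : Real.exp (-(m * (s₀ + ε))) • piv ψ y w + (s₀ + ε) • y ∈ V :=
      interior_subset hw
    exact csInf_le (SS_bddBelow hψy hβ w) hw2
  have hlower : ∀ᶠ w in 𝓝 w₀, s₀ - ε ≤ Gf V ψ y m w := by
    have hnot : Real.exp (-(m * (s₀ - ε))) • piv ψ y w₀ + (s₀ - ε) • y ∉ V := by
      intro hmem
      have : s₀ - ε ∈ SS V ψ y m w₀ := hmem
      rw [SS_eq_Ici hcl hconv hrec hψy hβ h0 hγ hγ0 hm] at this
      have : s₀ ≤ s₀ - ε := this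
      linarith
    have hcont : Continuous fun w => Real.exp (-(m * (s₀ - ε))) • piv ψ y w + (s₀ - ε) • y := by
      unfold piv; fun_prop
    have : ∀ᶠ w in 𝓝 w₀,
        Real.exp (-(m * (s₀ - ε))) • piv ψ y w + (s₀ - ε) • y ∈ Vᶜ :=
      (hcont.tendsto w₀).eventually (IsOpen.mem_nhds hcl.isOpen_compl hnot)
    filter_upwards [this] with w hw
    by_contra hlt
    push_neg at hlt
    have : s₀ - ε ∈ SS V ψ y m w := by
      rw [SS_eq_Ici hcl hconv hrec hψy hβ h0 hγ hγ0 hm]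
      exact le_of_lt hlt
    exact hw this
  filter_upwards [hupper, hlower] with w h1 h2
  exact ⟨h2, h1⟩

/-- The shear homeomorphism. -/
noncomputable def sigmaHomeo (hcl : IsClosed V) (hconv : Convex ℝ V)
    (hrec : ∀ x ∈ V, ∀ t : ℝ, 0 ≤ t → x + t • y ∈ V)
    (hψy : ψ y = 1) (hβ : ∀ x ∈ V, β ≤ ψ x)
    (h0 : (0:X) ∈ interior V) (hγ : -γ • y ∈ interior V) (hγ0 : 0 < γ)
    (hm : m = (-β - γ + 1)⁻¹) : X ≃ₜ X where
  toFun x := x - (Gf V ψ y m x + 1) • y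
  invFun x := x + (Gf V ψ y m x + 1) • y
  left_inv x := by
    dsimp only
    rw [sub_eq_add_neg, ← neg_smul, Gf_shift hψy]
    module
  right_inv x := by
    dsimp only
    rw [Gf_shift hψy]
    module
  continuous_toFun := by
    have := Gf_continuous hcl hconv hrec hψy hβ h0 hγ hγ0 hm
    fun_prop
  continuous_invFun := by
    have := Gf_continuous hcl hconv hrec hψy hβ h0 hγ hγ0 hm
    fun_prop

include hcl hconv hrec hψy hβ h0 hγ hγ0 hm in
theorem core : ∃ H : X ≃ₜ X, H '' V = ψ ⁻¹' (Ici (-1)) := by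
  refine ⟨(thHomeo ψ y m hψy).trans
    (sigmaHomeo hcl hconv hrec hψy hβ h0 hγ hγ0 hm), ?_⟩
  have himg1 : th ψ y m '' V = {x | Gf V ψ y m x ≤ ψ x} := by
    ext x
    constructor
    · rintro ⟨u, hu, rfl⟩
      rw [mem_setOf_eq, psi_th hψy]
      apply csInf_le (SS_bddBelow hψy hβ _)
      show Real.exp (-(m * ψ u)) • piv ψ y (th ψ y m u) + ψ u • y ∈ V
      rw [piv_th hψy, smul_smul, ← Real.exp_add]
      simpa [piv] using hu
    · intro hx
      refine ⟨thInv ψ y m x, ?_, th_thInv hψy x⟩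
      have : ψ x ∈ SS V ψ y m x := by
        rw [SS_eq_Ici hcl hconv hrec hψy hβ h0 hγ hγ0 hm]
        exact hx
      exact this
  have himg2 : (fun x => x - (Gf V ψ y m x + 1) • y) '' {x | Gf V ψ y m x ≤ ψ x}
      = ψ ⁻¹' (Ici (-1)) := by
    ext x'
    constructor
    · rintro ⟨x, hx, rfl⟩
      simp only [mem_preimage, mem_Ici, map_sub, map_smul, hψy, smul_eq_mul, mul_one]
      simp only [mem_setOf_eq] at hx
      linarith
    · intro hx'
      simp only [mem_preimage, mem_Ici] at hx'
      refine ⟨x' + (Gf V ψ y m x' + 1) • y, ?_, ?_⟩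
      · simp only [mem_setOf_eq]
        rw [Gf_shift hψy, map_add, map_smul, hψy, smul_eq_mul, mul_one]
        linarith
      · dsimp only
        rw [Gf_shift hψy]
        module
  calc ((thHomeo ψ y m hψy).trans
      (sigmaHomeo hcl hconv hrec hψy hβ h0 hγ hγ0 hm)) '' V
      = (fun x => x - (Gf V ψ y m x + 1) • y) '' (th ψ y m '' V) := by
        rw [← image_comp]; rfl
    _ = ψ ⁻¹' (Ici (-1)) := by rw [himg1, himg2]

end Core

end BK19

/-- Case (iii) of the Bessaga–Klee classification: if the characteristic cone of a
closed convex body `U` is not a linear subspace, then the pair `(X, U)` is homeomorphic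
to `(X, X⁺)` with `X⁺ = φ⁻¹([−1, ∞))` a closed half-space. -/
theorem stmt19 {X : Type*} [AddCommGroup X] [Module ℝ X] [TopologicalSpace X]
    [IsTopologicalAddGroup X] [ContinuousSMul ℝ X] [T2Space X]
    (U : Set X) (hcl : IsClosed U) (hconv : Convex ℝ U)
    (hint : (interior U).Nonempty)
    (hns : ¬ ∃ S : Submodule ℝ X, (S : Set X) = charCone U) :
    ∃ (φ : X →L[ℝ] ℝ) (H : X ≃ₜ X), φ ≠ 0 ∧ H '' U = φ ⁻¹' (Ici (-1)) := by
  classical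
  obtain ⟨a, ha⟩ := hint
  have haU : a ∈ U := interior_subset ha
  -- the "for all basepoints" version of the characteristic cone property
  have hcc : ∀ x ∈ charCone U, ∀ b ∈ U, ∀ t : ℝ, 0 ≤ t → b + t • x ∈ U := by
    rintro x ⟨a₀, ha₀, hray⟩ b hb t ht
    have hev : ∀ᶠ ε in 𝓝[>] (0:ℝ), (1 - ε) • b + ε • a₀ + t • x ∈ U := by
      filter_upwards [Ioc_mem_nhdsGT_of_mem
        (show (0:ℝ) ∈ Ico (0:ℝ) 1 by constructor <;> norm_num)] with ε hε
      have hpt : a₀ + (t / ε) • x ∈ U := hray (t / ε) (div_nonneg ht (le_of_lt hε.1))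
      have hcomb : (1 - ε) • b + ε • (a₀ + (t / ε) • x) ∈ U :=
        hconv hb hpt (by linarith [hε.2]) (le_of_lt hε.1) (by ring)
      have hsc : ε * (t / ε) = t := by
        rw [mul_comm]
        exact div_mul_cancel₀ t (ne_of_gt hε.1)
      have heq : (1 - ε) • b + ε • (a₀ + (t / ε) • x)
          = (1 - ε) • b + ε • a₀ + t • x := by
        rw [smul_add, smul_smul, hsc, add_assoc]
      rwa [heq] at hcomb
    have hc : Continuous (fun ε : ℝ => (1 - ε) • b + ε • a₀ + t • x) := by fun_prop
    have hlim := hc.tendsto 0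
    simp only [sub_zero, one_smul, zero_smul, add_zero] at hlim
    exact hcl.mem_of_tendsto (hlim.mono_left nhdsWithin_le_nhds) hev
  -- find `y` in the cone with `-y` not in the cone
  have hy : ∃ y ∈ charCone U, -y ∉ charCone U := by
    by_contra hcon
    push_neg at hcon
    apply hns
    refine ⟨{ carrier := charCone U
              add_mem' := ?_
              zero_mem' := ?_
              smul_mem' := ?_ }, rfl⟩
    · rintro x₁ x₂ h₁ h₂
      refine ⟨a, haU, fun t ht => ?_⟩
      have hA := hcc x₁ h₁ a haU t ht
      have hB := hcc x₂ h₂ _ hA t ht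
      have heq : a + t • x₁ + t • x₂ = a + t • (x₁ + x₂) := by module
      rwa [heq] at hB
    · exact ⟨a, haU, fun t ht => by simpa using haU⟩
    · intro c x hx
      rcases le_or_gt 0 c with hc | hc
      · refine ⟨a, haU, fun t ht => ?_⟩
        have := hcc x hx a haU (t * c) (mul_nonneg ht hc)
        have heq : a + (t * c) • x = a + t • (c • x) := by module
        rwa [heq] at this
      · have hnx : -x ∈ charCone U := hcon x hx
        refine ⟨a, haU, fun t ht => ?_⟩
        have := hcc (-x) hnx a haU (t * (-c)) (mul_nonneg ht (by linarith))
        have heq : a + (t * (-c)) • (-x) = a + t • (c • x) := by module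
        rwa [heq] at this
  obtain ⟨y, hyC, hyn⟩ := hy
  -- the translated body
  set V : Set X := (fun x => x + a) ⁻¹' U with hV
  have hmemV : ∀ x : X, x ∈ V ↔ x + a ∈ U := fun x => Iff.rfl
  have hclV : IsClosed V := hcl.preimage (continuous_add_right a)
  have hconvV : Convex ℝ V := by
    intro x hx z hz s t hs ht hst
    have h1 : s • (x + a) + t • (z + a) ∈ U := hconv hx hz hs ht hst
    have h3 : s • (x + a) + t • (z + a) = s • x + t • z + (s + t) • a := by module
    rw [h3, hst, one_smul] at h1
    exact h1
  have hrecV : ∀ x ∈ V, ∀ t : ℝ, 0 ≤ t → x + t • y ∈ V := by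
    intro x hx t ht
    have h1 := hcc y hyC (x + a) hx t ht
    have heq : x + a + t • y = x + t • y + a := by abel
    rw [heq] at h1
    exact h1
  have h0V : (0:X) ∈ interior V := by
    have hpre : V = (Homeomorph.addRight a) ⁻¹' U := rfl
    rw [hpre, ← Homeomorph.preimage_interior]
    simpa using ha
  -- a point outside V on the negative ray
  have hbt : ∃ t₀ : ℝ, 0 < t₀ ∧ -t₀ • y ∉ V := by
    by_contra hcon
    push_neg at hcon
    apply hyn
    refine ⟨a, haU, fun t ht => ?_⟩
    rcases eq_or_lt_of_le ht with h | h
    · simp [← h]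
      exact haU
    · have := hcon t h
      rw [hmemV] at this
      have heq : -t • y + a = a + t • (-y) := by module
      rwa [heq] at this
  obtain ⟨t₀, ht₀, hbV⟩ := hbt
  have hbint : -t₀ • y ∉ interior V := fun h => hbV (interior_subset h)
  obtain ⟨f, hf⟩ := geometric_hahn_banach_open_point hconvV.interior isOpen_interior hbint
  -- f ≤ f(-t₀ y) on V
  have hfle : ∀ x ∈ V, f x ≤ f (-t₀ • y) := by
    intro x hx
    have hev : ∀ᶠ ε in 𝓝[>] (0:ℝ), f ((1 - ε) • x) < f (-t₀ • y) := by
      filter_upwards [Ioc_mem_nhdsGT_of_mem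
        (show (0:ℝ) ∈ Ico (0:ℝ) 1 by constructor <;> norm_num)] with ε hε
      have hmem : (1 - ε) • x + ε • (0:X) ∈ interior V :=
        hconvV.combo_closure_interior_mem_interior (subset_closure hx) h0V
          (by linarith [hε.2]) hε.1 (by ring)
      have := hf _ hmem
      simpa using this
    have hc : Continuous (fun ε : ℝ => f ((1 - ε) • x)) := by fun_prop
    have hlim := hc.tendsto 0
    simp only [sub_zero, one_smul, smul_zero, add_zero] at hlim
    exact le_of_tendsto (hlim.mono_left nhdsWithin_le_nhds)
      (hev.mono fun ε h => le_of_lt h)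
  have hf0 : (0:ℝ) < f (-t₀ • y) := by
    have := hf 0 h0V
    simpa using this
  have hfy : f y < 0 := by
    have h1 : f (-t₀ • y) = -t₀ * f y := by
      rw [map_smul]
      simp
    nlinarith
  set ψ : X →L[ℝ] ℝ := (f y)⁻¹ • f with hψdef
  have hψy : ψ y = 1 := by
    simp only [hψdef, ContinuousLinearMap.smul_apply, smul_eq_mul]
    exact inv_mul_cancel₀ (ne_of_lt hfy)
  set β : ℝ := (f y)⁻¹ * f (-t₀ • y) with hβdef
  have hβ : ∀ x ∈ V, β ≤ ψ x := by
    intro x hx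
    have h1 := hfle x hx
    have h2 : (f y)⁻¹ ≤ 0 := le_of_lt (inv_neg''.mpr hfy)
    have := mul_le_mul_of_nonpos_left h1 h2
    simpa [hψdef, hβdef] using this
  -- pick γ
  have hγex : ∃ γ : ℝ, 0 < γ ∧ -γ • y ∈ interior V := by
    have hcont : Continuous fun t : ℝ => -t • y := by fun_prop
    have htend := hcont.tendsto 0
    simp only [neg_zero, zero_smul] at htend
    have hev : ∀ᶠ t : ℝ in 𝓝 (0:ℝ), -t • y ∈ interior V :=
      htend.eventually (isOpen_interior.mem_nhds h0V)
    have hev2 : ∀ᶠ t : ℝ in 𝓝[>] (0:ℝ), -t • y ∈ interior V :=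
      hev.filter_mono nhdsWithin_le_nhds
    obtain ⟨γ, h1, h2⟩ := (hev2.and self_mem_nhdsWithin).exists
    exact ⟨γ, h2, h1⟩
  obtain ⟨γ, hγ0, hγ⟩ := hγex
  obtain ⟨H₀, hH₀⟩ := BK19.core hclV hconvV hrecV hψy hβ h0V hγ hγ0
    (rfl : (-β - γ + 1)⁻¹ = (-β - γ + 1)⁻¹)
  refine ⟨ψ, (Homeomorph.subRight a).trans H₀, ?_, ?_⟩
  · intro h
    rw [h] at hψy
    simp at hψy
  · have himg : (Homeomorph.subRight a) '' U = V := by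
      ext x
      constructor
      · rintro ⟨u, hu, rfl⟩
        rw [hmemV]
        simpa using hu
      · intro hx
        rw [hmemV] at hx
        exact ⟨x + a, hx, by simp⟩
    have hsplit : ((Homeomorph.subRight a).trans H₀) '' U
        = H₀ '' ((Homeomorph.subRight a) '' U) := by
      rw [show ⇑((Homeomorph.subRight a).trans H₀)
          = ⇑H₀ ∘ ⇑(Homeomorph.subRight a) from rfl, Set.image_comp]
    rw [hsplit, himg, hH₀]
end
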